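/- Fix N ∈ ℕ and let a = (a_0,…,a_N) ∈ ℝ^{N+1} satisfy a_0 = 1 and λ_a(y,x) ≥ 0 for all y ∈ {0,…,N} and x ∈ ℝ. Then the measures Λ_a(y,dx) := λ_a(y,x) γ(dx), y ∈ {0,…,N}, are Borel probability measures on ℝ, and the intertwining relation D_N Λ_a = Λ_a L holds: for every polynomial f : ℝ → ℝ and every y ∈ {0,…,N}, y(Λ_a[f](y−1) − Λ_a[f](y)) = ∫ (f''(x) − x f'(x)) λ_a(y,x) γ(dx), where Λ_a[f](y) = ∫ f(x) λ_a(y,x) γ(dx). -/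

import Mathlib

open MeasureTheory ProbabilityTheory

section Aux
open Real Filter Set Polynomial Asymptotics

/-- The standard gaussian pdf. -/
noncomputable def gpdf (x : ℝ) : ℝ := gaussianPDFReal 0 1 x

lemma gpdf_def : gpdf = gaussianPDFReal 0 1 := rfl

lemma gpdf_eq (x : ℝ) : gpdf x = (Real.sqrt (2 * π))⁻¹ * Real.exp (-(2⁻¹:ℝ) * x ^ 2) := by
  simp only [gpdf, gaussianPDFReal, NNReal.coe_one, mul_one, sub_zero]
  rw [show -x ^ 2 / 2 = -(2⁻¹:ℝ) * x ^ 2 by ring]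

lemma gpdf_nonneg (x : ℝ) : 0 ≤ gpdf x := gaussianPDFReal_nonneg 0 1 x

lemma hasDerivAt_gpdf (x : ℝ) : HasDerivAt gpdf (-x * gpdf x) x := by
  have hu : HasDerivAt (fun x : ℝ => -(2⁻¹:ℝ) * x ^ 2) (-x) x := by
    simpa using (hasDerivAt_pow 2 x).const_mul (-(2⁻¹:ℝ))
  have := (hu.exp.const_mul ((Real.sqrt (2 * π))⁻¹))
  have h2 : (fun x : ℝ => (Real.sqrt (2 * π))⁻¹ * Real.exp (-(2⁻¹:ℝ) * x ^ 2)) = gpdf := by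
    funext y; rw [gpdf_eq]
  rw [h2] at this
  exact this.congr_deriv (by rw [gpdf_eq]; ring)

lemma integrable_pow_gauss (i : ℕ) :
    Integrable (fun x : ℝ => x ^ i * Real.exp (-(2⁻¹:ℝ) * x ^ 2)) := by
  have hb : (0:ℝ) < 2⁻¹ := by norm_num
  have h0 : IntegrableOn (fun x : ℝ => x ^ i * Real.exp (-(2⁻¹:ℝ) * x ^ 2)) (Ioi 0) := by
    refine (integrableOn_rpow_mul_exp_neg_mul_sq hb (s := (i:ℝ))
      (lt_of_lt_of_le neg_one_lt_zero (Nat.cast_nonneg i))).congr_fun ?_ measurableSet_Ioi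
    intro x hx
    simp [Real.rpow_natCast]
  rw [← integrableOn_univ, ← Iio_union_Ici (a := (0:ℝ)), integrableOn_union,
    integrableOn_Ici_iff_integrableOn_Ioi]
  refine ⟨?_, h0⟩
  rw [← (Measure.measurePreserving_neg (volume : Measure ℝ)).integrableOn_comp_preimage
      (Homeomorph.neg ℝ).measurableEmbedding]
  simp only [Function.comp_def, neg_sq, neg_preimage, neg_Iio, neg_neg, neg_zero]
  have : (fun x : ℝ => (-x) ^ i * Real.exp (-(2⁻¹:ℝ) * x ^ 2)) =
      fun x => (-1:ℝ)^i * (x ^ i * Real.exp (-(2⁻¹:ℝ) * x ^ 2)) := by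
    funext x; rw [neg_pow]; ring
  rw [this]
  exact h0.const_mul _

lemma integrable_poly_gauss (P : Polynomial ℝ) :
    Integrable (fun x : ℝ => P.eval x * gpdf x) := by
  have : (fun x : ℝ => P.eval x * gpdf x) = fun x =>
      ∑ i ∈ Finset.range (P.natDegree + 1),
        (P.coeff i * (Real.sqrt (2 * π))⁻¹) * (x ^ i * Real.exp (-(2⁻¹:ℝ) * x ^ 2)) := by
    funext x
    rw [gpdf_eq, Polynomial.eval_eq_sum_range, Finset.sum_mul]
    exact Finset.sum_congr rfl fun i _ => by ring
  rw [this]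
  exact integrable_finset_sum _ fun i _ => (integrable_pow_gauss i).const_mul _

lemma tendsto_pow_gauss_atTop (i : ℕ) :
    Tendsto (fun x : ℝ => x ^ i * Real.exp (-(2⁻¹:ℝ) * x ^ 2)) atTop (nhds 0) := by
  have h := (rpow_mul_exp_neg_mul_sq_isLittleO_exp_neg (b := 2⁻¹) (by norm_num)
      (i:ℝ)).tendsto_zero_of_tendsto (by
        have : Tendsto (fun x : ℝ => -(1/2) * x) atTop atBot :=
          (tendsto_const_mul_atBot_of_neg (by norm_num)).mpr tendsto_id
        exact Real.tendsto_exp_atBot.comp this)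
  refine h.congr' ?_
  filter_upwards [eventually_gt_atTop (0:ℝ)] with x hx
  rw [Real.rpow_natCast]

lemma tendsto_poly_gauss_atTop (P : Polynomial ℝ) (c : ℝ) :
    Tendsto (fun x : ℝ => P.eval x * (c * Real.exp (-(2⁻¹:ℝ) * x ^ 2))) atTop (nhds 0) := by
  have : (fun x : ℝ => P.eval x * (c * Real.exp (-(2⁻¹:ℝ) * x ^ 2))) = fun x =>
      ∑ i ∈ Finset.range (P.natDegree + 1),
        (P.coeff i * c) * (x ^ i * Real.exp (-(2⁻¹:ℝ) * x ^ 2)) := by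
    funext x
    rw [Polynomial.eval_eq_sum_range, Finset.sum_mul]
    exact Finset.sum_congr rfl fun i _ => by ring
  rw [this]
  have := tendsto_finset_sum (Finset.range (P.natDegree + 1))
    (fun i _ => ((tendsto_pow_gauss_atTop i).const_mul (P.coeff i * c)))
  simpa using this

lemma tendsto_poly_gpdf_atTop (P : Polynomial ℝ) :
    Tendsto (fun x : ℝ => P.eval x * gpdf x) atTop (nhds 0) := by
  have := tendsto_poly_gauss_atTop P ((Real.sqrt (2 * π))⁻¹)
  refine this.congr fun x => ?_
  rw [gpdf_eq]

lemma tendsto_poly_gpdf_atBot (P : Polynomial ℝ) :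
    Tendsto (fun x : ℝ => P.eval x * gpdf x) atBot (nhds 0) := by
  have h := tendsto_poly_gpdf_atTop (P.comp (-Polynomial.X))
  have h2 : Tendsto (fun x : ℝ => P.eval x * gpdf x)  atBot (nhds 0) := by
    have := h.comp tendsto_neg_atBot_atTop
    refine this.congr fun x => ?_
    simp only [Function.comp_apply, Polynomial.eval_comp, Polynomial.eval_neg, Polynomial.eval_X,
      neg_neg]
    congr 1
    rw [gpdf_eq, gpdf_eq, neg_sq]
  exact h2

lemma hasDerivAt_poly_gpdf (P : Polynomial ℝ) (x : ℝ) :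
    HasDerivAt (fun x => P.eval x * gpdf x)
      ((P.derivative.eval x - x * P.eval x) * gpdf x) x := by
  have := (P.hasDerivAt x).mul (hasDerivAt_gpdf x)
  exact this.congr_deriv (by ring)

lemma eval_LP (P : Polynomial ℝ) (x : ℝ) :
    (P.derivative - Polynomial.X * P).eval x = P.derivative.eval x - x * P.eval x := by simp

lemma integral_L_gauss (P : Polynomial ℝ) :
    ∫ x : ℝ, (P.derivative.eval x - x * P.eval x) * gpdf x = 0 := by
  set f' : ℝ → ℝ := fun x => (P.derivative.eval x - x * P.eval x) * gpdf x with hf'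
  have hint : Integrable f' := by
    have := integrable_poly_gauss (P.derivative - Polynomial.X * P)
    refine this.congr (Eventually.of_forall fun x => ?_)
    simp [hf']
  have hIoi : ∫ x in Ioi (0:ℝ), f' x = 0 - (P.eval 0 * gpdf 0) :=
    integral_Ioi_of_hasDerivAt_of_tendsto' (fun x _ => hasDerivAt_poly_gpdf P x)
      hint.integrableOn (tendsto_poly_gpdf_atTop P)
  have hIic : ∫ x in Iic (0:ℝ), f' x = (P.eval 0 * gpdf 0) - 0 :=
    integral_Iic_of_hasDerivAt_of_tendsto' (fun x _ => hasDerivAt_poly_gpdf P x)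
      hint.integrableOn (tendsto_poly_gpdf_atBot P)
  have := intervalIntegral.integral_Iic_add_Ioi (b := (0:ℝ)) hint.integrableOn hint.integrableOn
  rw [← this, hIoi, hIic]
  ring

lemma stein (P : Polynomial ℝ) :
    ∫ x : ℝ, P.derivative.eval x * gpdf x = ∫ x : ℝ, (x * P.eval x) * gpdf x := by
  have h := integral_L_gauss P
  have h1 : Integrable (fun x : ℝ => P.derivative.eval x * gpdf x) := integrable_poly_gauss _
  have h2 : Integrable (fun x : ℝ => (x * P.eval x) * gpdf x) := by
    have := integrable_poly_gauss (Polynomial.X * P)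
    refine this.congr (Eventually.of_forall fun x => ?_); simp
  have : (fun x : ℝ => (P.derivative.eval x - x * P.eval x) * gpdf x) =
      fun x => P.derivative.eval x * gpdf x - (x * P.eval x) * gpdf x := by
    funext x; ring
  rw [this, integral_sub h1 h2] at h
  linarith

end Aux

/-- The probabilists' Hermite polynomials over `ℝ`:
`h_0 = 1`, `h_{n+1}(x) = x h_n(x) - h_n'(x)`. -/
noncomputable def hermiteR : ℕ → Polynomial ℝ
  | 0 => 1
  | n + 1 => Polynomial.X * hermiteR n - Polynomial.derivative (hermiteR n)

/-- `λ_a(y,x) = ∑_{n=0}^{min(y,N)} (a_n / n!) C(y,n) h_n(x)`. -/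
noncomputable def lambdaA (N : ℕ) (a : ℕ → ℝ) (y : ℕ) (x : ℝ) : ℝ :=
  ∑ n ∈ Finset.range (min y N + 1), (a n / (n.factorial : ℝ)) * (y.choose n : ℝ) * (hermiteR n).eval x

section Hermite
open Real Filter Set Polynomial

lemma hermiteR_deriv (n : ℕ) :
    (hermiteR (n + 1)).derivative = C ((n:ℝ) + 1) * hermiteR n := by
  induction n with
  | zero => simp [hermiteR]
  | succ m ih =>
    show (Polynomial.X * hermiteR (m+1) - (hermiteR (m+1)).derivative).derivative = _
    rw [derivative_sub, derivative_mul, derivative_X, one_mul, ih, derivative_mul,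
      derivative_C, zero_mul, zero_add]
    have : (X : Polynomial ℝ) * (C ((m:ℝ)+1) * hermiteR m) - C ((m:ℝ)+1) * (hermiteR m).derivative
        = C ((m:ℝ)+1) * hermiteR (m+1) := by
      show _ = C ((m:ℝ)+1) * (X * hermiteR m - (hermiteR m).derivative)
      ring
    rw [add_sub_assoc, this]
    have h2 : C ((↑(m+1):ℝ) + 1) = C ((m:ℝ)+1) + 1 := by push_cast; simp [C_add]
    rw [h2]
    ring

lemma hermiteR_L (n : ℕ) :
    (hermiteR n).derivative.derivative - Polynomial.X * (hermiteR n).derivative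
      = C (-(n:ℝ)) * hermiteR n := by
  cases n with
  | zero => simp [hermiteR]
  | succ m =>
    rw [hermiteR_deriv, derivative_mul, derivative_C, zero_mul, zero_add]
    have h2 : C (-((↑(m+1):ℕ):ℝ)) = -C ((m:ℝ)+1) := by push_cast; simp [C_neg, C_add]
    have : C ((m:ℝ)+1) * (hermiteR m).derivative - X * (C ((m:ℝ)+1) * hermiteR m)
        = C (-(((m:ℕ)+1:ℕ):ℝ)) * (X * hermiteR m - (hermiteR m).derivative) := by
      rw [h2]; ring
    rw [this]
    rfl

lemma choose_identity {y : ℕ} (hy : 1 ≤ y) (n : ℕ) :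
    (y:ℝ) * (((y-1).choose n : ℝ) - (y.choose n : ℝ)) = -(n:ℝ) * (y.choose n : ℝ) := by
  obtain ⟨k, rfl⟩ : ∃ k, y = k + 1 := ⟨y - 1, (Nat.succ_pred_eq_of_pos hy).symm⟩
  cases n with
  | zero => simp
  | succ m =>
    have hps : (k+1).choose (m+1) = k.choose m + k.choose (m+1) := Nat.choose_succ_succ k m
    have hmc : (k+1) * k.choose m = (k+1).choose (m+1) * (m+1) := Nat.add_one_mul_choose_eq k m
    rw [hps] at hmc
    have hmc' : ((k:ℝ)+1) * (k.choose m : ℝ)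
        = ((k.choose m : ℝ) + (k.choose (m+1) : ℝ)) * ((m:ℝ)+1) := by
      exact_mod_cast congrArg (fun t : ℕ => (t:ℝ)) hmc
    simp only [Nat.add_sub_cancel, hps]
    push_cast
    nlinarith [hmc']

/-- The polynomial whose evaluation is `lambdaA`. -/
noncomputable def lamPoly (N : ℕ) (a : ℕ → ℝ) (y : ℕ) : Polynomial ℝ :=
  ∑ n ∈ Finset.range (min y N + 1),
    C (a n / (n.factorial : ℝ) * (y.choose n : ℝ)) * hermiteR n

lemma lamPoly_L {N y : ℕ} (a : ℕ → ℝ) (hy : y ≤ N) :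
    (lamPoly N a y).derivative.derivative - Polynomial.X * (lamPoly N a y).derivative
      = (y:ℝ) • (lamPoly N a (y-1) - lamPoly N a y) := by
  have hmin : min y N = y := min_eq_left hy
  rcases Nat.eq_zero_or_pos y with rfl | hy1
  · have h0 : lamPoly N a 0 = C (a 0 / (Nat.factorial 0 : ℝ) * ((Nat.choose 0 0 : ℕ) : ℝ)) := by
      simp [lamPoly, hermiteR]
    simp [h0]
  · obtain ⟨k, rfl⟩ : ∃ k, y = k + 1 := ⟨y - 1, (Nat.succ_pred_eq_of_pos hy1).symm⟩
    have hk : min k N = k := min_eq_left (le_trans (Nat.le_succ k) hy)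
    have hprev : lamPoly N a k =
        ∑ n ∈ Finset.range (k + 2),
          C (a n / (n.factorial : ℝ) * ((k.choose n : ℕ) : ℝ)) * hermiteR n := by
      rw [lamPoly, hk, Finset.sum_range_succ (n := k + 1)]
      simp [Nat.choose_succ_self]
    have hLHS : (lamPoly N a (k+1)).derivative.derivative
          - Polynomial.X * (lamPoly N a (k+1)).derivative
        = ∑ n ∈ Finset.range (k + 2),
            C (a n / (n.factorial : ℝ) * (((k+1).choose n : ℕ) : ℝ)) *
              (C (-(n:ℝ)) * hermiteR n) := by
      rw [lamPoly, hmin]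
      rw [derivative_sum, derivative_sum, Finset.mul_sum, ← Finset.sum_sub_distrib]
      refine Finset.sum_congr rfl fun n _ => ?_
      rw [derivative_C_mul, derivative_C_mul]
      rw [show Polynomial.X * (C (a n / (n.factorial : ℝ) * (((k+1).choose n : ℕ) : ℝ)) *
          (hermiteR n).derivative) = C (a n / (n.factorial : ℝ) * (((k+1).choose n : ℕ) : ℝ)) *
          (Polynomial.X * (hermiteR n).derivative) by ring, ← mul_sub, hermiteR_L]
    rw [hLHS]
    have : (k+1) - 1 = k := rfl
    rw [this, hprev, lamPoly, hmin, ← Finset.sum_sub_distrib, Finset.smul_sum]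
    refine Finset.sum_congr rfl fun n _ => ?_
    rw [← sub_mul, ← C_sub, smul_eq_C_mul, ← mul_assoc, ← C_mul, ← mul_assoc, ← C_mul]
    congr 1
    have := choose_identity (Nat.succ_le_succ (Nat.zero_le k)) (y := k+1) n
    rw [show (k+1) - 1 = k from rfl] at this
    push_cast at this ⊢
    congr 1
    linear_combination (-(a n / (n.factorial : ℝ))) * this

end Hermite

section GI
open Real Filter Set Polynomial

/-- Integral of a polynomial against the standard gaussian density. -/
noncomputable def GI (P : Polynomial ℝ) : ℝ := ∫ x : ℝ, P.eval x * gpdf x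

lemma GI_add (P Q : Polynomial ℝ) : GI (P + Q) = GI P + GI Q := by
  simp only [GI, eval_add, add_mul]
  exact integral_add (integrable_poly_gauss P) (integrable_poly_gauss Q)

lemma GI_sub (P Q : Polynomial ℝ) : GI (P - Q) = GI P - GI Q := by
  simp only [GI, eval_sub, sub_mul]
  exact integral_sub (integrable_poly_gauss P) (integrable_poly_gauss Q)

lemma GI_smul (c : ℝ) (P : Polynomial ℝ) : GI (c • P) = c * GI P := by
  simp only [GI, eval_smul, smul_eq_mul, mul_assoc]
  exact MeasureTheory.integral_const_mul c _

lemma GI_C_mul (c : ℝ) (P : Polynomial ℝ) : GI (C c * P) = c * GI P := by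
  rw [← smul_eq_C_mul, GI_smul]

lemma GI_stein (P : Polynomial ℝ) : GI P.derivative = GI (Polynomial.X * P) := by
  simp only [GI, eval_mul, eval_X]
  exact stein P

lemma GI_half (p q : Polynomial ℝ) :
    GI ((p.derivative.derivative - Polynomial.X * p.derivative) * q)
      = -GI (p.derivative * q.derivative) := by
  have h1 : (p.derivative.derivative - Polynomial.X * p.derivative) * q
      = (p.derivative * q).derivative - Polynomial.X * (p.derivative * q)
        - p.derivative * q.derivative := by
    rw [derivative_mul]; ring
  rw [h1, GI_sub, GI_sub, GI_stein]
  ring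

lemma GI_selfadj (p q : Polynomial ℝ) :
    GI ((p.derivative.derivative - Polynomial.X * p.derivative) * q)
      = GI ((q.derivative.derivative - Polynomial.X * q.derivative) * p) := by
  rw [GI_half, GI_half, mul_comm]

lemma GI_one : GI 1 = 1 := by
  simp only [GI, eval_one, one_mul, gpdf_def]
  exact integral_gaussianPDFReal_eq_one 0 one_ne_zero

lemma GI_hermite_succ (n : ℕ) : GI (hermiteR (n + 1)) = 0 := by
  rw [show hermiteR (n+1) = Polynomial.X * hermiteR n - (hermiteR n).derivative from rfl,
    GI_sub, GI_stein]
  ring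

lemma lambdaA_eq (N : ℕ) (a : ℕ → ℝ) (y : ℕ) (x : ℝ) :
    lambdaA N a y x = (lamPoly N a y).eval x := by
  simp only [lambdaA, lamPoly, eval_finset_sum, eval_mul, eval_C, mul_assoc]

lemma GI_lamPoly {N y : ℕ} (a : ℕ → ℝ) (ha0 : a 0 = 1) : GI (lamPoly N a y) = 1 := by
  have hGIsum : GI (lamPoly N a y)
      = ∑ n ∈ Finset.range (min y N + 1),
          (a n / (n.factorial : ℝ) * (y.choose n : ℝ)) * GI (hermiteR n) := by
    simp only [GI, lamPoly, eval_finset_sum, Finset.sum_mul]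
    rw [integral_finset_sum _ (fun n _ => integrable_poly_gauss _)]
    refine Finset.sum_congr rfl fun n _ => ?_
    simp only [GI, eval_mul, eval_C, mul_assoc]
    rw [MeasureTheory.integral_const_mul]
    congr 1
    rw [MeasureTheory.integral_const_mul]
  rw [hGIsum, Finset.sum_eq_single 0]
  · rw [show hermiteR 0 = 1 from rfl, GI_one, ha0]; simp
  · intro n _ hn
    obtain ⟨m, rfl⟩ := Nat.exists_eq_succ_of_ne_zero hn
    rw [GI_hermite_succ]; ring
  · intro h; exact absurd (Finset.mem_range.2 (Nat.succ_pos _)) h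

lemma measurable_lambdaA (N : ℕ) (a : ℕ → ℝ) (y : ℕ) : Measurable (lambdaA N a y) := by
  have : lambdaA N a y = fun x => (lamPoly N a y).eval x := funext (lambdaA_eq N a y)
  rw [this]
  exact (Polynomial.continuous _).measurable

lemma integral_gr (P : Polynomial ℝ) :
    ∫ x, P.eval x ∂(gaussianReal 0 1) = GI P := by
  rw [gaussianReal_of_var_ne_zero 0 one_ne_zero]
  have hpdf : gaussianPDF 0 1 = fun x => ((Real.toNNReal (gpdf x) : NNReal) : ENNReal) := by
    funext x; rw [gpdf_def]; rfl
  rw [hpdf, _root_.integral_withDensity_eq_integral_smul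
    (by exact (gpdf_def ▸ measurable_gaussianPDFReal 0 1).real_toNNReal) (fun x => P.eval x)]
  refine integral_congr_ae (Eventually.of_forall fun x => ?_)
  simp [NNReal.smul_def, Real.coe_toNNReal _ (gpdf_nonneg x), mul_comm]

end GI

open Real Filter Set Polynomial in
/-- If `a ∈ ℝ^{N+1}` satisfies `a_0 = 1` and `λ_a(y,x) ≥ 0` for all `y ∈ {0,…,N}`, `x ∈ ℝ`,
then the measures `Λ_a(y,dx) = λ_a(y,x) γ(dx)` are probability measures and the
intertwining relation `D_N Λ_a = Λ_a L` holds on polynomials. -/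
theorem lambdaA_gives_intertwining (N : ℕ) (a : ℕ → ℝ) (ha0 : a 0 = 1)
    (hpos : ∀ y, y ≤ N → ∀ x : ℝ, 0 ≤ lambdaA N a y x) :
    (∀ y, y ≤ N →
      IsProbabilityMeasure
        ((gaussianReal 0 1).withDensity (fun x => ENNReal.ofReal (lambdaA N a y x)))) ∧
    (∀ p : Polynomial ℝ, ∀ y, y ≤ N →
      (y : ℝ) * ((∫ x, p.eval x * lambdaA N a (y - 1) x ∂(gaussianReal 0 1)) -
          ∫ x, p.eval x * lambdaA N a y x ∂(gaussianReal 0 1)) =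
        ∫ x, (p.derivative.derivative.eval x - x * p.derivative.eval x) * lambdaA N a y x
          ∂(gaussianReal 0 1)) := by
  have key : ∀ (q : Polynomial ℝ) (y : ℕ),
      (∫ x, q.eval x * lambdaA N a y x ∂(gaussianReal 0 1)) = GI (q * lamPoly N a y) := by
    intro q y
    rw [show (fun x => q.eval x * lambdaA N a y x) = fun x => (q * lamPoly N a y).eval x from
      by funext x; rw [lambdaA_eq, eval_mul]]
    exact integral_gr _
  constructor
  · intro y hy
    constructor
    rw [MeasureTheory.withDensity_apply _ MeasurableSet.univ, Measure.restrict_univ]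
    rw [gaussianReal_of_var_ne_zero 0 one_ne_zero]
    rw [lintegral_withDensity_eq_lintegral_mul _ (measurable_gaussianPDF 0 1)
      ((measurable_lambdaA N a y).ennreal_ofReal)]
    have h1 : ∀ x, gaussianPDF 0 1 x * ENNReal.ofReal (lambdaA N a y x)
        = ENNReal.ofReal (lambdaA N a y x * gpdf x) := by
      intro x
      rw [gaussianPDF, ← gpdf_def, ← ENNReal.ofReal_mul (gpdf_nonneg x), mul_comm]
    simp only [Pi.mul_apply, h1]
    rw [← MeasureTheory.ofReal_integral_eq_lintegral_ofReal]
    · rw [show (fun x => lambdaA N a y x * gpdf x) = fun x => (lamPoly N a y).eval x * gpdf x from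
        by funext x; rw [lambdaA_eq]]
      rw [show (∫ x, (lamPoly N a y).eval x * gpdf x) = GI (lamPoly N a y) from rfl,
        GI_lamPoly a ha0]
      simp
    · exact (integrable_poly_gauss (lamPoly N a y)).congr
        (Eventually.of_forall fun x => by simp only [lambdaA_eq])
    · exact Eventually.of_forall fun x => mul_nonneg (hpos y hy x) (gpdf_nonneg x)
  · intro p y hy
    rw [key, key]
    have hy1 : y - 1 ≤ N := le_trans (Nat.sub_le y 1) hy
    have hRHS : (∫ x, (p.derivative.derivative.eval x - x * p.derivative.eval x)
          * lambdaA N a y x ∂(gaussianReal 0 1))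
        = GI ((p.derivative.derivative - Polynomial.X * p.derivative) * lamPoly N a y) := by
      rw [show (fun x => (p.derivative.derivative.eval x - x * p.derivative.eval x)
            * lambdaA N a y x)
          = fun x => ((p.derivative.derivative - Polynomial.X * p.derivative)
            * lamPoly N a y).eval x from by funext x; rw [lambdaA_eq]; simp]
      exact integral_gr _
    rw [hRHS, GI_selfadj, lamPoly_L a hy]
    rw [show ((y:ℝ) • (lamPoly N a (y-1) - lamPoly N a y)) * p
        = (y:ℝ) • (p * lamPoly N a (y-1) - p * lamPoly N a y) from by
      rw [smul_mul_assoc]; ring_nf]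
    rw [GI_smul, GI_sub]
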